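/- Let Z be a compact metric space and let (z_n) be a sequence in Z such that d(z_n, z_{n+1}) → 0 as n → ∞. Then the set of cluster points of (z_n) is nonempty, closed, and connected. -/

import Mathlib

open Filter Metric Set

/-- Let `Z` be a compact metric space and `(z n)` a sequence in `Z` with
`dist (z n) (z (n+1)) → 0`. Then the set of cluster points of `(z n)` (points that are limits
of some subsequence) is nonempty, closed and connected. -/
theorem cluster_set_nonempty_closed_connected
    {Z : Type*} [MetricSpace Z] [CompactSpace Z] (z : ℕ → Z)
    (hstep : Filter.Tendsto (fun n => dist (z n) (z (n + 1))) Filter.atTop (nhds 0)) :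
    ({p : Z | MapClusterPt p Filter.atTop z}).Nonempty ∧
      IsClosed {p : Z | MapClusterPt p Filter.atTop z} ∧
      IsConnected {p : Z | MapClusterPt p Filter.atTop z} := by
  set L := {p : Z | MapClusterPt p Filter.atTop z} with hLdef
  have hLclosed : IsClosed L := isClosed_setOf_clusterPt (f := map z atTop)
  have hLne : L.Nonempty := by
    obtain ⟨p, hp⟩ := exists_clusterPt_of_compactSpace (map z atTop)
    exact ⟨p, hp⟩
  refine ⟨hLne, hLclosed, hLne, ?_⟩
  rw [isPreconnected_iff_subset_of_fully_disjoint_closed hLclosed]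
  intro u v hu hv huv hdisj
  by_contra hcon
  push_neg at hcon
  obtain ⟨hnu, hnv⟩ := hcon
  set A := L ∩ u with hAdef
  set B := L ∩ v with hBdef
  have hAne : A.Nonempty := by
    obtain ⟨q, hqL, hqv⟩ := not_subset.mp hnv
    have : q ∈ u ∪ v := huv hqL
    exact ⟨q, hqL, this.resolve_right hqv⟩
  have hBne : B.Nonempty := by
    obtain ⟨q, hqL, hqu⟩ := not_subset.mp hnu
    have : q ∈ u ∪ v := huv hqL
    exact ⟨q, hqL, this.resolve_left hqu⟩
  have hAclosed : IsClosed A := hLclosed.inter hu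
  have hBclosed : IsClosed B := hLclosed.inter hv
  have hAc : IsCompact A := hAclosed.isCompact
  -- separation: positive distance between A and B
  obtain ⟨a0, ha0A, ha0min⟩ :=
    hAc.exists_isMinOn hAne ((continuous_infDist_pt B).continuousOn)
  have ha0nB : a0 ∉ B := fun hb => hdisj.le_bot ⟨ha0A.2, hb.2⟩
  set ε := infDist a0 B with hεdef
  have hε : 0 < ε := (hBclosed.notMem_iff_infDist_pos hBne).mp ha0nB
  have hε3 : 0 < ε / 3 := by linarith
  have hsep : ∀ a ∈ A, ∀ b ∈ B, ε ≤ dist a b := fun a ha b hb =>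
    le_trans (ha0min ha) (infDist_le_dist_of_mem hb)
  set f : ℕ → ℝ := fun n => infDist (z n) A with hfdef
  -- frequently close to A
  have hfreqA : ∃ᶠ n in atTop, f n < ε / 3 := by
    obtain ⟨a, haA⟩ := hAne
    have ha : MapClusterPt a atTop z := haA.1
    have := (mapClusterPt_iff_frequently.mp ha) (ball a (ε / 3)) (ball_mem_nhds _ hε3)
    refine this.mono fun n hn => ?_
    calc f n ≤ dist (z n) a := infDist_le_dist_of_mem haA
    _ < ε / 3 := by simpa [dist_comm] using hn
  -- frequently far from A
  have hfreqB : ∃ᶠ n in atTop, 2 * ε / 3 ≤ f n := by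
    obtain ⟨b, hbB⟩ := hBne
    have hb : MapClusterPt b atTop z := hbB.1
    have := (mapClusterPt_iff_frequently.mp hb) (ball b (ε / 3)) (ball_mem_nhds _ hε3)
    refine this.mono fun n hn => ?_
    refine le_of_not_gt fun hlt => ?_
    obtain ⟨a, haA, hda⟩ := (infDist_lt_iff hAne).mp hlt
    have h1 : ε ≤ dist a b := hsep a haA b hbB
    have h2 : dist (z n) b < ε / 3 := by simpa [dist_comm] using hn
    have h3 : dist a b ≤ dist a (z n) + dist (z n) b := dist_triangle _ _ _
    rw [dist_comm a (z n)] at h3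
    linarith
  -- steps eventually small
  obtain ⟨N, hN⟩ := (Metric.tendsto_atTop.mp hstep (ε / 3) hε3)
  have hNstep : ∀ n ≥ N, dist (z n) (z (n + 1)) < ε / 3 := by
    intro n hn
    have := hN n hn
    rwa [Real.dist_eq, sub_zero, abs_of_nonneg dist_nonneg] at this
  have hlip : ∀ n, f (n + 1) ≤ f n + dist (z n) (z (n + 1)) := by
    intro n
    simpa [dist_comm] using infDist_le_infDist_add_dist (x := z (n + 1)) (y := z n) (s := A)
  -- frequently in the middle region
  have hmid : ∃ᶠ n in atTop, ε / 3 ≤ f n ∧ f n ≤ 2 * ε / 3 := by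
    rw [frequently_atTop]
    intro N'
    obtain ⟨n1, hn1ge, hn1⟩ := frequently_atTop.mp hfreqA (max N N')
    obtain ⟨n2, hn2ge, hn2⟩ := frequently_atTop.mp hfreqB (n1 + 1)
    have hex : ∃ k, ε / 3 ≤ f (n1 + k) := by
      refine ⟨n2 - n1, ?_⟩
      have : n1 + (n2 - n1) = n2 := by omega
      rw [this]; linarith
    set k0 := Nat.find hex with hk0def
    have hk0 : ε / 3 ≤ f (n1 + k0) := Nat.find_spec hex
    have hk0pos : 0 < k0 := by
      rcases Nat.eq_zero_or_pos k0 with h | h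
      · exfalso
        have := hk0
        rw [h] at this
        simp at this
        linarith
      · exact h
    have hprev : ¬ ε / 3 ≤ f (n1 + (k0 - 1)) := Nat.find_min hex (by omega)
    push_neg at hprev
    refine ⟨n1 + k0, by omega, hk0, ?_⟩
    have hstepm : dist (z (n1 + (k0 - 1))) (z (n1 + (k0 - 1) + 1)) < ε / 3 :=
      hNstep _ (by omega)
    have := hlip (n1 + (k0 - 1))
    have heq : n1 + (k0 - 1) + 1 = n1 + k0 := by omega
    rw [heq] at this hstepm
    linarith
  -- extract a cluster point in the middle region
  set S : Set ℕ := {n | ε / 3 ≤ f n ∧ f n ≤ 2 * ε / 3} with hSdef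
  have hne : (atTop ⊓ 𝓟 S).NeBot := by
    rw [← frequently_mem_iff_neBot]
    exact hmid
  obtain ⟨p, hp⟩ := exists_clusterPt_of_compactSpace (map z (atTop ⊓ 𝓟 S))
  have hpL : p ∈ L := hp.mono (map_mono inf_le_left)
  set M : Set Z := (fun x => infDist x A) ⁻¹' Icc (ε / 3) (2 * ε / 3) with hMdef
  have hMclosed : IsClosed M := isClosed_Icc.preimage (continuous_infDist_pt A)
  have hpM : p ∈ M := by
    have hle : map z (atTop ⊓ 𝓟 S) ≤ 𝓟 M := by
      rw [le_principal_iff, mem_map]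
      filter_upwards [mem_inf_of_right (mem_principal_self S)] with n hn
      exact ⟨hn.1, hn.2⟩
    have : ClusterPt p (𝓟 M) := hp.mono hle
    rw [← hMclosed.closure_eq]
    exact mem_closure_iff_clusterPt.mpr this
  have hpAB : p ∈ u ∪ v := huv hpL
  rcases hpAB with hpu | hpv
  · simp only [hMdef, mem_preimage, mem_Icc] at hpM
    linarith [hpM.1, (infDist_zero_of_mem (⟨hpL, hpu⟩ : p ∈ A) : infDist p A = 0)]
  · have hpB : p ∈ B := ⟨hpL, hpv⟩
    have hεle : ε ≤ infDist p A := by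
      refine le_of_not_gt fun hlt => ?_
      obtain ⟨a, haA, hda⟩ := (infDist_lt_iff hAne).mp hlt
      have := hsep a haA p hpB
      rw [dist_comm] at this
      linarith
    simp only [hMdef, mem_preimage, mem_Icc] at hpM
    linarith [hpM.2]
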